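/- In any bicategory with binary bicategorical coproducts and bicategorical coequalizers, bicategorical pushouts exist. Specifically, given f : C → A and g : C → B, the bicategorical pushout of f and g is given by the bicategorical coequalizer of ι_A ∘ f : C → A ⊔ B and ι_B ∘ g : C → A ⊔ B, where A ⊔ B is the bicategorical coproduct with coprojections ι_A, ι_B. -/
import Mathlib


/-!
Statement 6: In any bicategory with binary bicategorical coproducts and bicategorical
coequalizers, bicategorical pushouts exist; specifically, the bicategorical pushout of
`f : c ⟶ a` and `g : c ⟶ b` is the bicategorical coequalizer of
`ι_a ∘ f, ι_b ∘ g : c ⟶ a ⊔ b`.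

The universal properties are stated in the standard elementary form: precomposition is
essentially surjective and fully faithful onto the relevant (pseudo-)pullback data.
-/

open CategoryTheory Bicategory

universe w v u

variable {B : Type u} [Bicategory.{w, v} B]

/-- `(s, ia, ib)` is a bicategorical coproduct of `a` and `b`: for every `t`,
precomposition induces an equivalence `Hom(s,t) ≃ Hom(a,t) × Hom(b,t)`. -/
def IsBicatCoproduct {a b s : B} (ia : a ⟶ s) (ib : b ⟶ s) : Prop :=
  ∀ t : B,
    (∀ (u : a ⟶ t) (v : b ⟶ t),
      ∃ k : s ⟶ t, Nonempty (ia ≫ k ≅ u) ∧ Nonempty (ib ≫ k ≅ v)) ∧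
    (∀ (k l : s ⟶ t) (θu : ia ≫ k ⟶ ia ≫ l) (θv : ib ≫ k ⟶ ib ≫ l),
      ∃! θ : k ⟶ l, ia ◁ θ = θu ∧ ib ◁ θ = θv)

/-- `(p, w)` is a bicategorical coequalizer of `f, g : a ⟶ b`: for every `t`,
precomposition induces an equivalence between `Hom(c,t)` and pairs
`(q : b ⟶ t, β : f ≫ q ≅ g ≫ q)`. -/
def IsBicatCoequalizer {a b c : B} (f g : a ⟶ b) (p : b ⟶ c) (w : f ≫ p ≅ g ≫ p) : Prop :=
  ∀ t : B,
    (∀ (q : b ⟶ t) (β : f ≫ q ≅ g ≫ q),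
      ∃ (k : c ⟶ t) (e : p ≫ k ≅ q),
        β.hom = f ◁ e.inv ≫ (α_ f p k).inv ≫ w.hom ▷ k ≫ (α_ g p k).hom ≫ g ◁ e.hom) ∧
    (∀ (k l : c ⟶ t) (θ : p ≫ k ⟶ p ≫ l),
      ((α_ f p k).inv ≫ w.hom ▷ k ≫ (α_ g p k).hom) ≫ g ◁ θ =
        f ◁ θ ≫ ((α_ f p l).inv ≫ w.hom ▷ l ≫ (α_ g p l).hom) →
      ∃! π : k ⟶ l, p ◁ π = θ)

/-- `(ia, ib, w)` is a bicategorical pushout of `f : c ⟶ a` and `g : c ⟶ b`: for every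
`t`, precomposition induces an equivalence between `Hom(s,t)` and the bicategorical
pullback `Hom(a,t) ×_{Hom(c,t)} Hom(b,t)`, whose objects are triples
`(u, v, β : f ≫ u ≅ g ≫ v)`. -/
def IsBicatPushout {a b c s : B} (f : c ⟶ a) (g : c ⟶ b) (ia : a ⟶ s) (ib : b ⟶ s)
    (w : f ≫ ia ≅ g ≫ ib) : Prop :=
  ∀ t : B,
    (∀ (u : a ⟶ t) (v : b ⟶ t) (β : f ≫ u ≅ g ≫ v),
      ∃ (k : s ⟶ t) (eu : ia ≫ k ≅ u) (ev : ib ≫ k ≅ v),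
        β.hom = f ◁ eu.inv ≫ (α_ f ia k).inv ≫ w.hom ▷ k ≫ (α_ g ib k).hom ≫ g ◁ ev.hom) ∧
    (∀ (k l : s ⟶ t) (θu : ia ≫ k ⟶ ia ≫ l) (θv : ib ≫ k ⟶ ib ≫ l),
      ((α_ f ia k).inv ≫ w.hom ▷ k ≫ (α_ g ib k).hom) ≫ g ◁ θv =
        f ◁ θu ≫ ((α_ f ia l).inv ≫ w.hom ▷ l ≫ (α_ g ib l).hom) →
      ∃! θ : k ⟶ l, ia ◁ θ = θu ∧ ib ◁ θ = θv)

/-- a bicategory with binary bicategorical coproducts and bicategorical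
coequalizers has bicategorical pushouts; specifically, the pushout of `f, g` is the
coequalizer of `f ≫ ι_a` and `g ≫ ι_b` into the coproduct. -/
theorem pushout_main {a b c s q : B} (f : c ⟶ a) (g : c ⟶ b) (ia : a ⟶ s) (ib : b ⟶ s)
    (p : s ⟶ q) (w : (f ≫ ia) ≫ p ≅ (g ≫ ib) ≫ p)
    (hcop : IsBicatCoproduct ia ib) (hce : IsBicatCoequalizer (f ≫ ia) (g ≫ ib) p w) :
    IsBicatPushout f g (ia ≫ p) (ib ≫ p) ((α_ f ia p).symm ≪≫ w ≪≫ α_ g ib p) := by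
  intro t
  constructor
  · intro u v β
    obtain ⟨m, ⟨eu0⟩, ⟨ev0⟩⟩ := (hcop t).1 u v
    obtain ⟨k, e, he⟩ := (hce t).1 m
      (α_ f ia m ≪≫ whiskerLeftIso f eu0 ≪≫ β ≪≫ (whiskerLeftIso g ev0).symm ≪≫
        (α_ g ib m).symm)
    simp only [Iso.trans_hom, Iso.symm_hom, whiskerLeftIso_hom, whiskerLeftIso_inv,
      Iso.symm_inv, Category.assoc] at he
    refine ⟨k, α_ ia p k ≪≫ whiskerLeftIso ia e ≪≫ eu0,
      α_ ib p k ≪≫ whiskerLeftIso ib e ≪≫ ev0, ?_⟩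
    simp only [Iso.trans_hom, Iso.trans_inv, Iso.symm_hom, Iso.symm_inv,
      whiskerLeftIso_hom, whiskerLeftIso_inv, Category.assoc]
    calc β.hom
        = f ◁ eu0.inv ≫ (α_ f ia m).inv ≫
            ((α_ f ia m).hom ≫ f ◁ eu0.hom ≫ β.hom ≫ g ◁ ev0.inv ≫ (α_ g ib m).inv) ≫
            (α_ g ib m).hom ≫ g ◁ ev0.hom := by
          simp [← Bicategory.whiskerLeft_comp]
      _ = f ◁ eu0.inv ≫ (α_ f ia m).inv ≫
            ((f ≫ ia) ◁ e.inv ≫ (α_ (f ≫ ia) p k).inv ≫ w.hom ▷ k ≫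
              (α_ (g ≫ ib) p k).hom ≫ (g ≫ ib) ◁ e.hom) ≫
            (α_ g ib m).hom ≫ g ◁ ev0.hom := by
          rw [he]
      _ = _ := by bicategory
  · intro k l θu θv hcomp
    obtain ⟨θ', ⟨hθu, hθv⟩, huniq⟩ := (hcop t).2 (p ≫ k) (p ≫ l)
      ((α_ ia p k).inv ≫ θu ≫ (α_ ia p l).hom) ((α_ ib p k).inv ≫ θv ≫ (α_ ib p l).hom)
    simp only [Iso.trans_hom, Iso.symm_hom, comp_whiskerRight, Category.assoc] at hcomp
    have hc : ((α_ (f ≫ ia) p k).inv ≫ w.hom ▷ k ≫ (α_ (g ≫ ib) p k).hom) ≫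
        (g ≫ ib) ◁ θ' = (f ≫ ia) ◁ θ' ≫
        ((α_ (f ≫ ia) p l).inv ≫ w.hom ▷ l ≫ (α_ (g ≫ ib) p l).hom) := by
      rw [comp_whiskerLeft, comp_whiskerLeft, hθu, hθv]
      calc ((α_ (f ≫ ia) p k).inv ≫ w.hom ▷ k ≫ (α_ (g ≫ ib) p k).hom) ≫
            (α_ g ib (p ≫ k)).hom ≫
              g ◁ ((α_ ib p k).inv ≫ θv ≫ (α_ ib p l).hom) ≫ (α_ g ib (p ≫ l)).inv
          = ((α_ f ia (p ≫ k)).hom ≫ f ◁ (α_ ia p k).inv) ≫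
              ((α_ f (ia ≫ p) k).inv ≫ (α_ f ia p).inv ▷ k ≫ w.hom ▷ k ≫
                (α_ g ib p).hom ▷ k ≫ (α_ g (ib ≫ p) k).hom ≫ g ◁ θv) ≫
              (g ◁ (α_ ib p l).hom ≫ (α_ g ib (p ≫ l)).inv) := by
            bicategory
        _ = ((α_ f ia (p ≫ k)).hom ≫ f ◁ (α_ ia p k).inv) ≫
              (f ◁ θu ≫ (α_ f (ia ≫ p) l).inv ≫ (α_ f ia p).inv ▷ l ≫ w.hom ▷ l ≫
                (α_ g ib p).hom ▷ l ≫ (α_ g (ib ≫ p) l).hom) ≫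
              (g ◁ (α_ ib p l).hom ≫ (α_ g ib (p ≫ l)).inv) := by
            rw [hcomp]
        _ = _ := by bicategory
    obtain ⟨θ, hθ, huniq2⟩ := (hce t).2 k l θ' hc
    refine ⟨θ, ⟨?_, ?_⟩, ?_⟩
    · rw [comp_whiskerLeft, hθ, hθu]; simp
    · rw [comp_whiskerLeft, hθ, hθv]; simp
    · rintro θ₂ ⟨h1, h2⟩
      refine huniq2 θ₂ (huniq (p ◁ θ₂) ⟨?_, ?_⟩)
      · rw [← h1, comp_whiskerLeft]; simp
      · rw [← h2, comp_whiskerLeft]; simp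

theorem bicat_pushout_of_coproducts_and_coequalizers
    (hcoprod : ∀ a b : B, ∃ (s : B) (ia : a ⟶ s) (ib : b ⟶ s), IsBicatCoproduct ia ib)
    (hcoeq : ∀ {x y : B} (f g : x ⟶ y),
      ∃ (c : B) (p : y ⟶ c) (w : f ≫ p ≅ g ≫ p), IsBicatCoequalizer f g p w) :
    -- bicategorical pushouts exist:
    (∀ {a b c : B} (f : c ⟶ a) (g : c ⟶ b),
      ∃ (s : B) (ia : a ⟶ s) (ib : b ⟶ s) (w : f ≫ ia ≅ g ≫ ib),
        IsBicatPushout f g ia ib w) ∧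
    -- specifically, they are given by coequalizers of the coproduct inclusions:
    (∀ {a b c s q : B} (f : c ⟶ a) (g : c ⟶ b) (ia : a ⟶ s) (ib : b ⟶ s)
      (p : s ⟶ q) (w : (f ≫ ia) ≫ p ≅ (g ≫ ib) ≫ p),
      IsBicatCoproduct ia ib → IsBicatCoequalizer (f ≫ ia) (g ≫ ib) p w →
      IsBicatPushout f g (ia ≫ p) (ib ≫ p)
        ((α_ f ia p).symm ≪≫ w ≪≫ α_ g ib p)) := by
  refine ⟨?_, fun f g ia ib p w hcop hce => pushout_main f g ia ib p w hcop hce⟩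
  intro a b c f g
  obtain ⟨s, ia, ib, hcop⟩ := hcoprod a b
  obtain ⟨q, p, w, hce⟩ := hcoeq (f ≫ ia) (g ≫ ib)
  exact ⟨q, ia ≫ p, ib ≫ p, _, pushout_main f g ia ib p w hcop hce⟩
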